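/- Let α, γ, η₁, θ₁₀ ∈ ℝ with η₁ > 0, and set η̄₁ = −η₁ and θ̄₁₀ = −θ₁₀. Define t₁₁(x,t) = (η̄₁ − η₁)·((64·η̄₁³·γ − 24i·η̄₁²·α + 4·η̄₁)·t − 2i·x) − 2i, t₁₂(x,t) = (η₁ − η̄₁)·((64·η₁³·γ − 24i·η₁²·α + 4·η₁)·t − 2i·x) − 2i, F(x,t) = (t₁₁(x,t) + 2i)·(t₁₂(x,t) + 2i), w(x,t) = (η₁ − η̄₁)·x + (i·(η̄₁² − η₁²) + 4α·(η̄₁³ − η₁³) + 8i·γ·(η̄₁⁴ − η₁⁴))·t − (i/2)·(θ₁₀ + θ̄₁₀), and u(x,t) = 2·(η₁ − η̄₁)·(t₁₁·exp(2η₁x + (2i·η₁² + 8α·η₁³ + 16i·γ·η₁⁴)·t + i·θ̄₁₀) + t₁₂·exp(2η̄₁x + (2i·η̄₁² + 8α·η̄₁³ + 16i·γ·η̄₁⁴)·t − i·θ₁₀)) / (4·cosh²(w(x,t)) + F(x,t)). Then for every fixed t ∈ ℝ, |u(x,t)| → 0 as x → +∞ and as x → −∞. -/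

import Mathlib

open Complex Filter

lemma aux_poly_exp (a p q : ℝ) (ha : 0 < a) :
    Tendsto (fun y : ℝ => (p + q * y) * Real.exp (-(a * y))) atTop (nhds 0) := by
  have hcomp : Tendsto (fun y : ℝ => a * y) atTop atTop :=
    Tendsto.const_mul_atTop ha tendsto_id
  have h1 : Tendsto (fun y : ℝ => Real.exp (-(a * y))) atTop (nhds 0) :=
    Real.tendsto_exp_atBot.comp ((tendsto_neg_atBot_iff).mpr hcomp)
  have h2' : Tendsto (fun y : ℝ => (a*y) ^ 1 * Real.exp (-(a*y))) atTop (nhds 0) :=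
    (Real.tendsto_pow_mul_exp_neg_atTop_nhds_zero 1).comp hcomp
  have h2 : Tendsto (fun y : ℝ => y * Real.exp (-(a * y))) atTop (nhds 0) := by
    have := h2'.const_mul (1/a)
    simp only [pow_one] at this
    convert this using 2 with y
    · field_simp
    · simp
  have := (h1.const_mul p).add (h2.const_mul q)
  simp only [mul_zero, add_zero] at this
  convert this using 2 with y
  ring

/-- `cosh s ≥ exp |s| / 2`. -/
lemma aux_cosh_ge (s : ℝ) : Real.exp |s| ≤ 2 * Real.cosh s := by
  rw [Real.cosh_eq]
  rcases abs_cases s with ⟨h, _⟩ | ⟨h, _⟩ <;> rw [h] <;>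
    nlinarith [Real.exp_pos s, Real.exp_pos (-s)]

/-- The second-order fundamental soliton of the ENLS equation is spatially localized:
`|u(x,t)| → 0` as `x → ±∞` for every fixed `t`. -/
theorem second_order_soliton_localized
    (α γ η₁ θ₁₀ : ℝ) (hη : 0 < η₁)
    (ηb₁ θb₁₀ : ℝ) (hηb : ηb₁ = -η₁) (hθb : θb₁₀ = -θ₁₀)
    (t₁₁ t₁₂ F w : ℝ → ℝ → ℂ)
    (ht₁₁ : ∀ x t, t₁₁ x t = ((ηb₁ : ℂ) - (η₁ : ℂ))
        * ((64 * (ηb₁ : ℂ) ^ 3 * (γ : ℂ) - 24 * Complex.I * (ηb₁ : ℂ) ^ 2 * (α : ℂ)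
            + 4 * (ηb₁ : ℂ)) * (t : ℂ) - 2 * Complex.I * (x : ℂ)) - 2 * Complex.I)
    (ht₁₂ : ∀ x t, t₁₂ x t = ((η₁ : ℂ) - (ηb₁ : ℂ))
        * ((64 * (η₁ : ℂ) ^ 3 * (γ : ℂ) - 24 * Complex.I * (η₁ : ℂ) ^ 2 * (α : ℂ)
            + 4 * (η₁ : ℂ)) * (t : ℂ) - 2 * Complex.I * (x : ℂ)) - 2 * Complex.I)
    (hF : ∀ x t, F x t = (t₁₁ x t + 2 * Complex.I) * (t₁₂ x t + 2 * Complex.I))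
    (hw : ∀ x t, w x t = ((η₁ : ℂ) - (ηb₁ : ℂ)) * (x : ℂ)
        + (Complex.I * ((ηb₁ : ℂ) ^ 2 - (η₁ : ℂ) ^ 2)
            + 4 * (α : ℂ) * ((ηb₁ : ℂ) ^ 3 - (η₁ : ℂ) ^ 3)
            + 8 * Complex.I * (γ : ℂ) * ((ηb₁ : ℂ) ^ 4 - (η₁ : ℂ) ^ 4)) * (t : ℂ)
        - (Complex.I / 2) * ((θ₁₀ : ℂ) + (θb₁₀ : ℂ)))
    (u : ℝ → ℝ → ℂ)
    (hu : ∀ x t, u x t = 2 * ((η₁ : ℂ) - (ηb₁ : ℂ))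
        * (t₁₁ x t * Complex.exp (2 * (η₁ : ℂ) * (x : ℂ)
              + (2 * Complex.I * (η₁ : ℂ) ^ 2 + 8 * (α : ℂ) * (η₁ : ℂ) ^ 3
                  + 16 * Complex.I * (γ : ℂ) * (η₁ : ℂ) ^ 4) * (t : ℂ)
              + Complex.I * (θb₁₀ : ℂ))
          + t₁₂ x t * Complex.exp (2 * (ηb₁ : ℂ) * (x : ℂ)
              + (2 * Complex.I * (ηb₁ : ℂ) ^ 2 + 8 * (α : ℂ) * (ηb₁ : ℂ) ^ 3
                  + 16 * Complex.I * (γ : ℂ) * (ηb₁ : ℂ) ^ 4) * (t : ℂ)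
              - Complex.I * (θ₁₀ : ℂ)))
        / (4 * (Complex.cosh (w x t)) ^ 2 + F x t)) :
    ∀ t : ℝ,
      Tendsto (fun x : ℝ => ‖u x t‖) atTop (nhds 0)
      ∧ Tendsto (fun x : ℝ => ‖u x t‖) atBot (nhds 0) := by
  intro t
  -- real constants
  set b₀ : ℝ := 8 * α * η₁ ^ 3 * t with hb₀def
  set d : ℝ := 16 * α * η₁ ^ 3 * t with hddef
  set wr : ℝ → ℝ := fun x => 2 * η₁ * x - b₀ with hwrdef
  set A₁c : ℂ := (-(64 * (η₁:ℂ) ^ 3 * (γ:ℂ)) - 24 * Complex.I * (η₁:ℂ) ^ 2 * (α:ℂ)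
      - 4 * (η₁:ℂ)) * (t:ℂ) with hA1def
  set A₂c : ℂ := (64 * (η₁:ℂ) ^ 3 * (γ:ℂ) - 24 * Complex.I * (η₁:ℂ) ^ 2 * (α:ℂ)
      + 4 * (η₁:ℂ)) * (t:ℂ) with hA2def
  set C : ℝ := max (‖A₁c‖) (‖A₂c‖) with hCdef
  have hC1 : ‖A₁c‖ ≤ C := le_max_left _ _
  have hC2 : ‖A₂c‖ ≤ C := le_max_right _ _
  have hCnn : 0 ≤ C := le_trans (norm_nonneg _) hC1
  -- w is real
  have hwc : ∀ x : ℝ, w x t = ((wr x : ℝ) : ℂ) := by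
    intro x
    rw [hw, hηb, hθb, hwrdef]
    push_cast [hb₀def]
    ring
  -- bounds on t₁₁ + 2I and t₁₂ + 2I
  have h11 : ∀ x : ℝ, t₁₁ x t + 2 * Complex.I
      = ((-(2*η₁) : ℝ) : ℂ) * (A₁c - 2 * Complex.I * (x:ℂ)) := by
    intro x; rw [ht₁₁, hηb, hA1def]; push_cast; ring
  have h12 : ∀ x : ℝ, t₁₂ x t + 2 * Complex.I
      = (((2*η₁) : ℝ) : ℂ) * (A₂c - 2 * Complex.I * (x:ℂ)) := by
    intro x; rw [ht₁₂, hηb, hA2def]; push_cast; ring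
  have habs2I : ∀ x : ℝ, ‖2 * Complex.I * (x:ℂ)‖ = 2 * |x| := by
    intro x
    simp [norm_mul, Complex.norm_real, Complex.norm_I, Complex.norm_two]
  have hb11 : ∀ x : ℝ, ‖t₁₁ x t + 2 * Complex.I‖ ≤ 2 * η₁ * (C + 2 * |x|) := by
    intro x
    rw [h11 x, norm_mul, Complex.norm_real, Real.norm_eq_abs, abs_neg, abs_of_pos (by linarith)]
    have h := (norm_sub_le A₁c (2 * Complex.I * (x:ℂ)))
    rw [habs2I] at h
    have : ‖A₁c - 2 * Complex.I * (x:ℂ)‖ ≤ C + 2 * |x| := by linarith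
    nlinarith [norm_nonneg (A₁c - 2 * Complex.I * (x:ℂ))]
  have hb12 : ∀ x : ℝ, ‖t₁₂ x t + 2 * Complex.I‖ ≤ 2 * η₁ * (C + 2 * |x|) := by
    intro x
    rw [h12 x, norm_mul, Complex.norm_real, Real.norm_eq_abs, abs_of_pos (by linarith)]
    have h := (norm_sub_le A₂c (2 * Complex.I * (x:ℂ)))
    rw [habs2I] at h
    have : ‖A₂c - 2 * Complex.I * (x:ℂ)‖ ≤ C + 2 * |x| := by linarith
    nlinarith [norm_nonneg (A₂c - 2 * Complex.I * (x:ℂ))]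
  have hb11' : ∀ x : ℝ, ‖t₁₁ x t‖ ≤ 2 * η₁ * (C + 2 * |x|) + 2 := by
    intro x
    have h : ‖t₁₁ x t‖ ≤ ‖t₁₁ x t + 2 * Complex.I‖
        + ‖2 * Complex.I‖ := by
      have := norm_sub_le (t₁₁ x t + 2 * Complex.I) (2 * Complex.I)
      simpa using this
    have h2 : ‖2 * Complex.I‖ = 2 := by simp [Complex.norm_two]
    have := hb11 x; rw [h2] at h; linarith
  have hb12' : ∀ x : ℝ, ‖t₁₂ x t‖ ≤ 2 * η₁ * (C + 2 * |x|) + 2 := by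
    intro x
    have h : ‖t₁₂ x t‖ ≤ ‖t₁₂ x t + 2 * Complex.I‖
        + ‖2 * Complex.I‖ := by
      have := norm_sub_le (t₁₂ x t + 2 * Complex.I) (2 * Complex.I)
      simpa using this
    have h2 : ‖2 * Complex.I‖ = 2 := by simp [Complex.norm_two]
    have := hb12 x; rw [h2] at h; linarith
  -- bound on F
  have hbF : ∀ x : ℝ, ‖F x t‖ ≤ (2 * η₁ * (C + 2 * |x|)) ^ 2 := by
    intro x
    rw [hF, norm_mul, sq]
    exact mul_le_mul (hb11 x) (hb12 x) (norm_nonneg _)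
      (by positivity)
  -- the exponential factors
  have hE1 : ∀ x : ℝ, ‖Complex.exp (2 * (η₁ : ℂ) * (x : ℂ)
        + (2 * Complex.I * (η₁ : ℂ) ^ 2 + 8 * (α : ℂ) * (η₁ : ℂ) ^ 3
            + 16 * Complex.I * (γ : ℂ) * (η₁ : ℂ) ^ 4) * (t : ℂ)
        + Complex.I * (θb₁₀ : ℂ))‖ = Real.exp (wr x + d) := by
    intro x
    rw [Complex.norm_exp]
    congr 1
    have : (2 * (η₁ : ℂ) * (x : ℂ)
        + (2 * Complex.I * (η₁ : ℂ) ^ 2 + 8 * (α : ℂ) * (η₁ : ℂ) ^ 3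
            + 16 * Complex.I * (γ : ℂ) * (η₁ : ℂ) ^ 4) * (t : ℂ)
        + Complex.I * (θb₁₀ : ℂ))
        = ((wr x + d : ℝ) : ℂ)
          + ((2 * η₁ ^ 2 * t + 16 * γ * η₁ ^ 4 * t + θb₁₀ : ℝ) : ℂ) * Complex.I := by
      rw [hwrdef]; push_cast [hb₀def, hddef]; ring
    rw [this]
    simp [← Complex.ofReal_pow]
  have hE2 : ∀ x : ℝ, ‖Complex.exp (2 * (ηb₁ : ℂ) * (x : ℂ)
        + (2 * Complex.I * (ηb₁ : ℂ) ^ 2 + 8 * (α : ℂ) * (ηb₁ : ℂ) ^ 3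
            + 16 * Complex.I * (γ : ℂ) * (ηb₁ : ℂ) ^ 4) * (t : ℂ)
        - Complex.I * (θ₁₀ : ℂ))‖ = Real.exp (-(wr x) - d) := by
    intro x
    rw [Complex.norm_exp]
    congr 1
    have : (2 * (ηb₁ : ℂ) * (x : ℂ)
        + (2 * Complex.I * (ηb₁ : ℂ) ^ 2 + 8 * (α : ℂ) * (ηb₁ : ℂ) ^ 3
            + 16 * Complex.I * (γ : ℂ) * (ηb₁ : ℂ) ^ 4) * (t : ℂ)
        - Complex.I * (θ₁₀ : ℂ))
        = ((-(wr x) - d : ℝ) : ℂ)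
          + ((2 * η₁ ^ 2 * t + 16 * γ * η₁ ^ 4 * t - θ₁₀ : ℝ) : ℂ) * Complex.I := by
      rw [hηb, hwrdef]; push_cast [hb₀def, hddef]; ring
    rw [this]
    simp [← Complex.ofReal_pow]
  -- |wr x| bounds
  have hwr_ub : ∀ x : ℝ, |wr x| ≤ 2 * η₁ * |x| + |b₀| := by
    intro x
    calc |wr x| = |2 * η₁ * x - b₀| := rfl
      _ ≤ |2 * η₁ * x| + |b₀| := abs_sub _ _
      _ = 2 * η₁ * |x| + |b₀| := by rw [abs_mul, abs_of_pos (by linarith : (0:ℝ) < 2 * η₁)]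
  have hwr_lb : ∀ x : ℝ, 2 * η₁ * |x| - |b₀| ≤ |wr x| := by
    intro x
    have h := abs_sub_abs_le_abs_sub (2 * η₁ * x) b₀
    rw [abs_mul, abs_of_pos (by linarith : (0:ℝ) < 2 * η₁)] at h
    exact h
  -- numerator bound
  have hnum : ∀ x : ℝ, ‖t₁₁ x t * Complex.exp (2 * (η₁ : ℂ) * (x : ℂ)
        + (2 * Complex.I * (η₁ : ℂ) ^ 2 + 8 * (α : ℂ) * (η₁ : ℂ) ^ 3
            + 16 * Complex.I * (γ : ℂ) * (η₁ : ℂ) ^ 4) * (t : ℂ)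
        + Complex.I * (θb₁₀ : ℂ))
      + t₁₂ x t * Complex.exp (2 * (ηb₁ : ℂ) * (x : ℂ)
        + (2 * Complex.I * (ηb₁ : ℂ) ^ 2 + 8 * (α : ℂ) * (ηb₁ : ℂ) ^ 3
            + 16 * Complex.I * (γ : ℂ) * (ηb₁ : ℂ) ^ 4) * (t : ℂ)
        - Complex.I * (θ₁₀ : ℂ))‖
      ≤ (2 * η₁ * (C + 2 * |x|) + 2) * (2 * Real.exp (2 * η₁ * |x| + |b₀| + |d|)) := by
    intro x
    refine le_trans (norm_add_le _ _) ?_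
    rw [norm_mul, norm_mul, hE1 x, hE2 x]
    have hexp1 : Real.exp (wr x + d) ≤ Real.exp (2 * η₁ * |x| + |b₀| + |d|) := by
      apply Real.exp_le_exp.mpr
      have := hwr_ub x
      have h1 : wr x ≤ |wr x| := le_abs_self _
      have h2 : d ≤ |d| := le_abs_self _
      linarith
    have hexp2 : Real.exp (-(wr x) - d) ≤ Real.exp (2 * η₁ * |x| + |b₀| + |d|) := by
      apply Real.exp_le_exp.mpr
      have := hwr_ub x
      have h1 : -(wr x) ≤ |wr x| := neg_le_abs _
      have h2 : -d ≤ |d| := neg_le_abs _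
      linarith
    have hB := hb11' x
    have hB2 := hb12' x
    have hBnn : (0:ℝ) ≤ 2 * η₁ * (C + 2 * |x|) + 2 := by positivity
    nlinarith [Real.exp_pos (wr x + d), Real.exp_pos (-(wr x) - d),
      norm_nonneg (t₁₁ x t), norm_nonneg (t₁₂ x t)]
  -- denominator lower bound: 4cosh² ≥ exp(2|wr|)
  have hcosh : ∀ x : ℝ, Real.exp (4 * η₁ * |x| - 2 * |b₀|)
      ≤ 4 * (Real.cosh (wr x)) ^ 2 := by
    intro x
    have h1 : Real.exp |wr x| ≤ 2 * Real.cosh (wr x) := aux_cosh_ge (wr x)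
    have h2 : Real.exp (2 * η₁ * |x| - |b₀|) ≤ Real.exp |wr x| :=
      Real.exp_le_exp.mpr (by have := hwr_lb x; linarith)
    have h3 : Real.exp (4 * η₁ * |x| - 2 * |b₀|)
        = Real.exp (2 * η₁ * |x| - |b₀|) ^ 2 := by
      rw [← Real.exp_nat_mul]; norm_num; ring_nf
    rw [h3]
    have h4 : Real.exp (2 * η₁ * |x| - |b₀|) ≤ 2 * Real.cosh (wr x) := le_trans h2 h1
    nlinarith [Real.exp_pos (2 * η₁ * |x| - |b₀|), Real.cosh_pos (wr x)]
  -- choose the eventual regime X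
  have hLtend : Tendsto (fun y : ℝ =>
      Real.exp (2 * |b₀|) * (((2*η₁*C + 4*η₁*y) * Real.exp (-((2*η₁)*y)))
        * ((2*η₁*C + 4*η₁*y) * Real.exp (-((2*η₁)*y))))) atTop (nhds 0) := by
    have h := aux_poly_exp (2*η₁) (2*η₁*C) (4*η₁) (by linarith)
    have := (h.mul h).const_mul (Real.exp (2 * |b₀|))
    simpa using this
  obtain ⟨X, hX⟩ := (eventually_atTop).mp
    (hLtend.eventually_le_const (by norm_num : (0:ℝ) < 1/2))
  -- on the regime, the denominator is large
  have hden : ∀ x : ℝ, X ≤ |x| →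
      (1/2) * Real.exp (4 * η₁ * |x| - 2 * |b₀|)
        ≤ ‖4 * (Complex.cosh (w x t)) ^ 2 + F x t‖ := by
    intro x hx
    have hF2 : ‖F x t‖ ≤ (1/2) * Real.exp (4 * η₁ * |x| - 2 * |b₀|) := by
      have h := hX |x| hx
      have hepos := Real.exp_pos (4 * η₁ * |x| - 2 * |b₀|)
      have hprod : Real.exp (4 * η₁ * |x| - 2 * |b₀|)
          * (Real.exp (-((2*η₁)*|x|)) * Real.exp (-((2*η₁)*|x|)) * Real.exp (2 * |b₀|))
          = 1 := by
        rw [← Real.exp_add, ← Real.exp_add, ← Real.exp_add]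
        ring_nf
        exact Real.exp_zero
      have h'' := mul_le_mul_of_nonneg_left h hepos.le
      have hcalc : (2 * η₁ * (C + 2 * |x|)) ^ 2
          ≤ (1/2) * Real.exp (4 * η₁ * |x| - 2 * |b₀|) := by
        calc (2 * η₁ * (C + 2 * |x|)) ^ 2
            = (2*η₁*C + 4*η₁*|x|) ^ 2 * (Real.exp (4 * η₁ * |x| - 2 * |b₀|)
              * (Real.exp (-((2*η₁)*|x|)) * Real.exp (-((2*η₁)*|x|)) * Real.exp (2 * |b₀|))) := by
              rw [hprod]; ring
          _ = Real.exp (4 * η₁ * |x| - 2 * |b₀|) * (Real.exp (2 * |b₀|)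
              * (((2*η₁*C + 4*η₁*|x|) * Real.exp (-((2*η₁)*|x|)))
                * ((2*η₁*C + 4*η₁*|x|) * Real.exp (-((2*η₁)*|x|))))) := by ring
          _ ≤ Real.exp (4 * η₁ * |x| - 2 * |b₀|) * (1/2) := h''
          _ = (1/2) * Real.exp (4 * η₁ * |x| - 2 * |b₀|) := by ring
      have hFx := hbF x
      linarith
    -- triangle inequality: |a + F| ≥ |a| - |F|
    have hre : (4 : ℂ) * (Complex.cosh (w x t)) ^ 2
        = ((4 * (Real.cosh (wr x)) ^ 2 : ℝ) : ℂ) := by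
      rw [hwc x, ← Complex.ofReal_cosh]
      push_cast
      ring
    have htri : ‖(4:ℂ) * (Complex.cosh (w x t)) ^ 2‖
        - ‖F x t‖
        ≤ ‖4 * (Complex.cosh (w x t)) ^ 2 + F x t‖ := by
      have h := norm_sub_le
        (4 * (Complex.cosh (w x t)) ^ 2 + F x t) (F x t)
      simp only [add_sub_cancel_right] at h
      linarith
    have habs4 : ‖(4:ℂ) * (Complex.cosh (w x t)) ^ 2‖
        = 4 * (Real.cosh (wr x)) ^ 2 := by
      rw [hre, Complex.norm_real, Real.norm_eq_abs, abs_of_pos (by positivity)]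
    rw [habs4] at htri
    have := hcosh x
    linarith
  -- the final bounding function
  set K : ℝ := 16 * η₁ * Real.exp (|d| + 3 * |b₀|) with hKdef
  have hKpos : 0 < K := by positivity
  set g : ℝ → ℝ := fun y =>
    (K * (2 * η₁ * C + 2) + (K * (4 * η₁)) * y) * Real.exp (-((2*η₁) * y)) with hgdef
  have hg : Tendsto g atTop (nhds 0) :=
    aux_poly_exp (2*η₁) (K * (2 * η₁ * C + 2)) (K * (4 * η₁)) (by linarith)
  -- key pointwise bound
  have hkey : ∀ x : ℝ, X ≤ |x| → ‖u x t‖ ≤ g |x| := by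
    intro x hx
    rw [hu]
    rw [norm_div, norm_mul]
    have habs2 : ‖2 * ((η₁:ℂ) - (ηb₁:ℂ))‖ = 4 * η₁ := by
      have : (2 : ℂ) * ((η₁:ℂ) - (ηb₁:ℂ)) = ((4 * η₁ : ℝ) : ℂ) := by
        rw [hηb]; push_cast; ring
      rw [this, Complex.norm_real, Real.norm_eq_abs, abs_of_pos (by linarith)]
    rw [habs2]
    have hdenpos : (0:ℝ) < (1/2) * Real.exp (4 * η₁ * |x| - 2 * |b₀|) := by positivity
    have hdle := hden x hx
    have hnle := hnum x
    have step : 4 * η₁ * ‖t₁₁ x t * Complex.exp (2 * (η₁ : ℂ) * (x : ℂ)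
          + (2 * Complex.I * (η₁ : ℂ) ^ 2 + 8 * (α : ℂ) * (η₁ : ℂ) ^ 3
              + 16 * Complex.I * (γ : ℂ) * (η₁ : ℂ) ^ 4) * (t : ℂ)
          + Complex.I * (θb₁₀ : ℂ))
        + t₁₂ x t * Complex.exp (2 * (ηb₁ : ℂ) * (x : ℂ)
          + (2 * Complex.I * (ηb₁ : ℂ) ^ 2 + 8 * (α : ℂ) * (ηb₁ : ℂ) ^ 3
              + 16 * Complex.I * (γ : ℂ) * (ηb₁ : ℂ) ^ 4) * (t : ℂ)
          - Complex.I * (θ₁₀ : ℂ))‖ / ‖4 * (Complex.cosh (w x t)) ^ 2 + F x t‖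
        ≤ (4 * η₁ * ((2 * η₁ * (C + 2 * |x|) + 2) * (2 * Real.exp (2 * η₁ * |x| + |b₀| + |d|))))
          / ((1/2) * Real.exp (4 * η₁ * |x| - 2 * |b₀|)) := by
      apply div_le_div₀ (by positivity) ?_ hdenpos hdle
      have h4 : (0:ℝ) ≤ 4 * η₁ := by linarith
      exact mul_le_mul_of_nonneg_left hnle h4
    refine le_trans step ?_
    -- simplify the RHS to g |x|
    have : (4 * η₁ * ((2 * η₁ * (C + 2 * |x|) + 2) * (2 * Real.exp (2 * η₁ * |x| + |b₀| + |d|))))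
          / ((1/2) * Real.exp (4 * η₁ * |x| - 2 * |b₀|)) = g |x| := by
      simp only [hgdef, hKdef]
      have e1 : Real.exp (2 * η₁ * |x| + |b₀| + |d|)
          = Real.exp (2 * η₁ * |x|) * Real.exp (|b₀| + |d|) := by
        rw [← Real.exp_add]; ring_nf
      have e2 : Real.exp (4 * η₁ * |x| - 2 * |b₀|)
          = Real.exp (2 * η₁ * |x|) * Real.exp (2 * η₁ * |x|) * Real.exp (-(2*|b₀|)) := by
        rw [← Real.exp_add, ← Real.exp_add]; ring_nf
      have e3 : Real.exp (-((2*η₁) * |x|)) = (Real.exp (2 * η₁ * |x|))⁻¹ := by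
        rw [← Real.exp_neg]
      have e4 : Real.exp (|d| + 3 * |b₀|)
          = Real.exp (|b₀| + |d|) * Real.exp (2 * |b₀|) := by
        rw [← Real.exp_add]; ring_nf
      have hep : (0:ℝ) < Real.exp (2 * η₁ * |x|) := Real.exp_pos _
      have hem : Real.exp (-(2*|b₀|)) = (Real.exp (2*|b₀|))⁻¹ := Real.exp_neg _
      rw [e1, e2, e3, e4, hem]
      field_simp
      ring
    rw [this]
  -- assemble
  have hg0 : ∀ x : ℝ, 0 ≤ ‖u x t‖ := fun x => norm_nonneg _
  constructor
  · refine squeeze_zero' (g := fun x => g |x|) (Eventually.of_forall hg0) ?_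
      (hg.comp tendsto_abs_atTop_atTop)
    filter_upwards [eventually_ge_atTop (max X 0)] with x hx
    have hx0 : 0 ≤ x := le_trans (le_max_right _ _) hx
    have hxX : X ≤ |x| := by
      rw [_root_.abs_of_nonneg hx0]; exact le_trans (le_max_left _ _) hx
    exact hkey x hxX
  · refine squeeze_zero' (g := fun x => g |x|) (Eventually.of_forall hg0) ?_
      (hg.comp tendsto_abs_atBot_atTop)
    filter_upwards [eventually_le_atBot (-(max X 0))] with x hx
    have hx0 : x ≤ 0 := le_trans hx (by simp [le_max_right])
    have hxX : X ≤ |x| := by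
      rw [_root_.abs_of_nonpos hx0]
      have h1 : max X 0 ≤ -x := by linarith
      exact le_trans (le_max_left _ _) h1
    exact hkey x hxX
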